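/- Let G₁ and G₂ be simple connected graphs with n₂ = |V(G₂)| vertices in G₂ and m₁ = |E(G₁)|, m₂ = |E(G₂)| edges. Then the F-index of the edge R-join satisfies F(G₁ ∨̱_R G₂) = 8F(G₁) + F(G₂) + 3m₁M₁(G₂) + 6m₁²m₂ + m₁(n₂ + 2)³ + n₂m₁³. -/

import Mathlib

/-- The subdivision graph `S(G)`: a new vertex is inserted into each edge of `G`
(each edge is replaced by a path of length 2). The inserted vertices form the
right summand `↥G.edgeSet`. -/
def Sgraph {V : Type*} (G : SimpleGraph V) : SimpleGraph (V ⊕ ↥G.edgeSet) where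
  Adj x y :=
    match x, y with
    | Sum.inl v, Sum.inr e => v ∈ (e : Sym2 V)
    | Sum.inr e, Sum.inl v => v ∈ (e : Sym2 V)
    | _, _ => False
  symm := by refine ⟨?_⟩; rintro (v | e) (w | f) h <;> exact h
  loopless := by refine ⟨?_⟩; rintro (v | e) h <;> exact h

/-- The graph `R(G)`: obtained from `G` by inserting a new vertex into each edge of `G`
and joining each new vertex to the end vertices of its corresponding edge. -/
def Rgraph {V : Type*} (G : SimpleGraph V) : SimpleGraph (V ⊕ ↥G.edgeSet) where
  Adj x y :=
    match x, y with
    | Sum.inl v, Sum.inl w => G.Adj v w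
    | Sum.inl v, Sum.inr e => v ∈ (e : Sym2 V)
    | Sum.inr e, Sum.inl v => v ∈ (e : Sym2 V)
    | Sum.inr _, Sum.inr _ => False
  symm := by
    refine ⟨?_⟩
    rintro (v | e) (w | f) h
    · exact G.adj_symm h
    · exact h
    · exact h
    · exact h
  loopless := by
    refine ⟨?_⟩
    rintro (v | e) h
    · exact G.irrefl h
    · exact h

/-- The graph `Q(G)`: obtained from `G` by inserting a new vertex into each edge of `G`,
then joining by edges those pairs of new vertices lying on adjacent edges of `G`. -/
def Qgraph {V : Type*} (G : SimpleGraph V) : SimpleGraph (V ⊕ ↥G.edgeSet) where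
  Adj x y :=
    match x, y with
    | Sum.inl _, Sum.inl _ => False
    | Sum.inl v, Sum.inr e => v ∈ (e : Sym2 V)
    | Sum.inr e, Sum.inl v => v ∈ (e : Sym2 V)
    | Sum.inr e, Sum.inr f => e ≠ f ∧ ∃ v, v ∈ (e : Sym2 V) ∧ v ∈ (f : Sym2 V)
  symm := by
    refine ⟨?_⟩
    rintro (v | e) (w | f) h
    · exact h
    · exact h
    · exact h
    · exact ⟨h.1.symm, by obtain ⟨v, h1, h2⟩ := h.2; exact ⟨v, h2, h1⟩⟩
  loopless := by
    refine ⟨?_⟩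
    rintro (v | e) h
    · exact h
    · exact h.1 rfl

/-- The total graph `T(G)`: obtained from `G` by inserting a new vertex into each edge,
joining each new vertex to the end vertices of its corresponding edge, and joining by
edges those pairs of new vertices lying on adjacent edges of `G`. -/
def Tgraph {V : Type*} (G : SimpleGraph V) : SimpleGraph (V ⊕ ↥G.edgeSet) where
  Adj x y :=
    match x, y with
    | Sum.inl v, Sum.inl w => G.Adj v w
    | Sum.inl v, Sum.inr e => v ∈ (e : Sym2 V)
    | Sum.inr e, Sum.inl v => v ∈ (e : Sym2 V)
    | Sum.inr e, Sum.inr f => e ≠ f ∧ ∃ v, v ∈ (e : Sym2 V) ∧ v ∈ (f : Sym2 V)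
  symm := by
    refine ⟨?_⟩
    rintro (v | e) (w | f) h
    · exact G.adj_symm h
    · exact h
    · exact h
    · exact ⟨h.1.symm, by obtain ⟨v, h1, h2⟩ := h.2; exact ⟨v, h2, h1⟩⟩
  loopless := by
    refine ⟨?_⟩
    rintro (v | e) h
    · exact G.irrefl h
    · exact h.1 rfl

/-- The disjoint union of `H` and `K` together with all edges joining a vertex `a` of `H`
with `P a` to every vertex of `K`. -/
def joinOn {A B : Type*} (H : SimpleGraph A) (K : SimpleGraph B) (P : A → Prop) :
    SimpleGraph (A ⊕ B) where
  Adj x y :=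
    match x, y with
    | Sum.inl a, Sum.inl a' => H.Adj a a'
    | Sum.inr b, Sum.inr b' => K.Adj b b'
    | Sum.inl a, Sum.inr _ => P a
    | Sum.inr _, Sum.inl a => P a
  symm := by
    refine ⟨?_⟩
    rintro (a | b) (a' | b') h
    · exact H.adj_symm h
    · exact h
    · exact h
    · exact K.adj_symm h
  loopless := by
    refine ⟨?_⟩
    rintro (a | b) h
    · exact H.irrefl h
    · exact K.irrefl h

/-- The vertex S-join `G₁ ∨̇_S G₂`: obtained from `S(G₁)` and `G₂` by joining each vertex
of `V(G₁)` to every vertex of `G₂`. -/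
def vertexSJoin {V₁ V₂ : Type*} (G₁ : SimpleGraph V₁) (G₂ : SimpleGraph V₂) :
    SimpleGraph ((V₁ ⊕ ↥G₁.edgeSet) ⊕ V₂) :=
  joinOn (Sgraph G₁) G₂ (fun x => x.isLeft)

/-- The edge S-join `G₁ ∨̱_S G₂`: obtained from `S(G₁)` and `G₂` by joining each inserted
vertex (each vertex of `I(G₁)`) to every vertex of `G₂`. -/
def edgeSJoin {V₁ V₂ : Type*} (G₁ : SimpleGraph V₁) (G₂ : SimpleGraph V₂) :
    SimpleGraph ((V₁ ⊕ ↥G₁.edgeSet) ⊕ V₂) :=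
  joinOn (Sgraph G₁) G₂ (fun x => x.isRight)

/-- The vertex R-join `G₁ ∨̇_R G₂`. -/
def vertexRJoin {V₁ V₂ : Type*} (G₁ : SimpleGraph V₁) (G₂ : SimpleGraph V₂) :
    SimpleGraph ((V₁ ⊕ ↥G₁.edgeSet) ⊕ V₂) :=
  joinOn (Rgraph G₁) G₂ (fun x => x.isLeft)

/-- The edge R-join `G₁ ∨̱_R G₂`. -/
def edgeRJoin {V₁ V₂ : Type*} (G₁ : SimpleGraph V₁) (G₂ : SimpleGraph V₂) :
    SimpleGraph ((V₁ ⊕ ↥G₁.edgeSet) ⊕ V₂) :=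
  joinOn (Rgraph G₁) G₂ (fun x => x.isRight)

/-- The vertex Q-join `G₁ ∨̇_Q G₂`. -/
def vertexQJoin {V₁ V₂ : Type*} (G₁ : SimpleGraph V₁) (G₂ : SimpleGraph V₂) :
    SimpleGraph ((V₁ ⊕ ↥G₁.edgeSet) ⊕ V₂) :=
  joinOn (Qgraph G₁) G₂ (fun x => x.isLeft)

/-- The edge Q-join `G₁ ∨̱_Q G₂`. -/
def edgeQJoin {V₁ V₂ : Type*} (G₁ : SimpleGraph V₁) (G₂ : SimpleGraph V₂) :
    SimpleGraph ((V₁ ⊕ ↥G₁.edgeSet) ⊕ V₂) :=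
  joinOn (Qgraph G₁) G₂ (fun x => x.isRight)

/-- The vertex T-join `G₁ ∨̇_T G₂`. -/
def vertexTJoin {V₁ V₂ : Type*} (G₁ : SimpleGraph V₁) (G₂ : SimpleGraph V₂) :
    SimpleGraph ((V₁ ⊕ ↥G₁.edgeSet) ⊕ V₂) :=
  joinOn (Tgraph G₁) G₂ (fun x => x.isLeft)

/-- The edge T-join `G₁ ∨̱_T G₂`. -/
def edgeTJoin {V₁ V₂ : Type*} (G₁ : SimpleGraph V₁) (G₂ : SimpleGraph V₂) :
    SimpleGraph ((V₁ ⊕ ↥G₁.edgeSet) ⊕ V₂) :=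
  joinOn (Tgraph G₁) G₂ (fun x => x.isRight)

/-- Degree of a vertex in a graph on a finite vertex type. -/
noncomputable def gdeg {V : Type*} [Finite V] (G : SimpleGraph V) (v : V) : ℕ :=
  haveI : Fintype ↥(G.neighborSet v) := Fintype.ofFinite _
  G.degree v

/-- The forgotten topological index (F-index): `F(G) = ∑_{v ∈ V(G)} d_G(v)³`. -/
noncomputable def Findex {V : Type*} [Finite V] (G : SimpleGraph V) : ℕ :=
  haveI := Fintype.ofFinite V
  ∑ v : V, gdeg G v ^ 3

/-- The first Zagreb index: `M₁(G) = ∑_{v ∈ V(G)} d_G(v)²`. -/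
noncomputable def M1 {V : Type*} [Finite V] (G : SimpleGraph V) : ℕ :=
  haveI := Fintype.ofFinite V
  ∑ v : V, gdeg G v ^ 2

/-- `M₄(G) = ∑_{v ∈ V(G)} d_G(v)⁴`. -/
noncomputable def M4 {V : Type*} [Finite V] (G : SimpleGraph V) : ℕ :=
  haveI := Fintype.ofFinite V
  ∑ v : V, gdeg G v ^ 4

/-- The hyper Zagreb index: `HM(G) = ∑_{uv ∈ E(G)} (d_G(u) + d_G(v))²`. -/
noncomputable def HM {V : Type*} [Finite V] (G : SimpleGraph V) : ℕ :=
  haveI : Fintype ↥G.edgeSet := Fintype.ofFinite _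
  ∑ e : ↥G.edgeSet,
    Sym2.lift ⟨fun u v => (gdeg G u + gdeg G v) ^ 2,
      fun u v => by dsimp only; rw [add_comm]⟩ (e : Sym2 V)

/-- The redefined Zagreb index:
`ReZM(G) = ∑_{uv ∈ E(G)} d_G(u) d_G(v) (d_G(u) + d_G(v))`. -/
noncomputable def ReZM {V : Type*} [Finite V] (G : SimpleGraph V) : ℕ :=
  haveI : Fintype ↥G.edgeSet := Fintype.ofFinite _
  ∑ e : ↥G.edgeSet,
    Sym2.lift ⟨fun u v => gdeg G u * gdeg G v * (gdeg G u + gdeg G v),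
      fun u v => by dsimp only; ring⟩ (e : Sym2 V)

/-- The number of edges of `G`. -/
noncomputable def numEdges {V : Type*} (G : SimpleGraph V) : ℕ :=
  Nat.card ↥G.edgeSet


section Aux
variable {A B : Type*}

lemma ncard_subtype_sum [Finite A] [Finite B] (r : A ⊕ B → Prop) (p : A → Prop) (q : B → Prop)
    (h1 : ∀ a, r (.inl a) ↔ p a) (h2 : ∀ b, r (.inr b) ↔ q b) :
    Nat.card {x // r x} = Nat.card {a // p a} + Nat.card {b // q b} := by
  rw [← Nat.card_sum]
  refine Nat.card_congr
    { toFun := fun x => match x with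
        | ⟨Sum.inl a, h⟩ => Sum.inl ⟨a, (h1 a).1 h⟩
        | ⟨Sum.inr b, h⟩ => Sum.inr ⟨b, (h2 b).1 h⟩
      invFun := Sum.elim (fun a => ⟨Sum.inl a.1, (h1 a.1).2 a.2⟩)
        (fun b => ⟨Sum.inr b.1, (h2 b.1).2 b.2⟩)
      left_inv := by rintro ⟨a | b, h⟩ <;> rfl
      right_inv := by rintro (a | b) <;> rfl }

lemma ncard_false [Finite B] : Nat.card {_b : B // False} = 0 := by
  haveI : IsEmpty {_b : B // False} := ⟨fun x => x.2⟩
  exact Nat.card_of_isEmpty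

lemma ncard_true [Finite B] : Nat.card {_b : B // True} = Nat.card B :=
  Nat.card_congr (Equiv.subtypeUnivEquiv (fun _ => trivial))

lemma gdeg_ncard {V : Type*} [Finite V] (G : SimpleGraph V) (v : V) :
    gdeg G v = Nat.card {w // G.Adj v w} := by
  unfold gdeg
  have key : ∀ (inst : Fintype ↥(G.neighborSet v)),
      @SimpleGraph.degree V G v inst = Nat.card {w // G.Adj v w} := by
    intro inst
    rw [← SimpleGraph.card_neighborSet_eq_degree, ← Nat.card_eq_fintype_card]
    exact Nat.card_congr (Equiv.subtypeEquivRight (fun _ => Iff.rfl))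
  exact key _

lemma gdeg_eq_degree {V : Type*} [Fintype V] (G : SimpleGraph V) [DecidableRel G.Adj] (v : V) :
    gdeg G v = G.degree v := by
  rw [gdeg_ncard, ← SimpleGraph.card_neighborSet_eq_degree, ← Nat.card_eq_fintype_card]
  exact Nat.card_congr (Equiv.subtypeEquivRight (fun _ => Iff.rfl))

lemma ncard_incidence {V : Type*} [Finite V] (G : SimpleGraph V) (v : V) :
    Nat.card {e : ↥G.edgeSet // v ∈ (e : Sym2 V)} = gdeg G v := by
  haveI := Classical.decEq V
  rw [gdeg_ncard]
  refine Nat.card_congr (Equiv.trans ?_ (Equiv.trans (G.incidenceSetEquivNeighborSet v)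
    (Equiv.subtypeEquivRight (fun _ => Iff.rfl))))
  exact { toFun := fun x => ⟨x.1.1, x.1.2, x.2⟩
          invFun := fun x => ⟨⟨x.1, x.2.1⟩, x.2.2⟩
          left_inv := fun _ => rfl
          right_inv := fun _ => rfl }

lemma ncard_mem_edge {V : Type*} [Finite V] (G : SimpleGraph V) (e : ↥G.edgeSet) :
    Nat.card {v // v ∈ (e : Sym2 V)} = 2 := by
  obtain ⟨e, he⟩ := e
  induction e using Sym2.ind with
  | _ u w =>
    rw [SimpleGraph.mem_edgeSet] at he
    have : Nat.card {v // v ∈ (s(u, w) : Sym2 V)} = Nat.card ({u, w} : Set V) :=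
      Nat.card_congr (Equiv.subtypeEquivRight (fun v => by simp [Sym2.mem_iff]))
    rw [this, Nat.card_coe_set_eq, Set.ncard_pair he.ne]

lemma sum_gdeg {V : Type*} [Fintype V] (G : SimpleGraph V) :
    ∑ v : V, gdeg G v = 2 * numEdges G := by
  haveI := Classical.decEq V
  haveI : DecidableRel G.Adj := fun _ _ => Classical.dec _
  simp_rw [gdeg_eq_degree]
  rw [SimpleGraph.sum_degrees_eq_twice_card_edges, SimpleGraph.edgeFinset_card, numEdges,
    Nat.card_eq_fintype_card]

end Aux

section Deg
variable {V₁ V₂ : Type*} [Finite V₁] [Finite V₂] (G₁ : SimpleGraph V₁) (G₂ : SimpleGraph V₂)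

lemma deg_vv (v : V₁) : gdeg (edgeRJoin G₁ G₂) (.inl (.inl v)) = 2 * gdeg G₁ v := by
  rw [gdeg_ncard]
  have h1 : Nat.card {y : (V₁ ⊕ ↥G₁.edgeSet) ⊕ V₂ //
        (edgeRJoin G₁ G₂).Adj (Sum.inl (Sum.inl v)) y}
      = Nat.card {x : V₁ ⊕ ↥G₁.edgeSet // (Rgraph G₁).Adj (Sum.inl v) x}
        + Nat.card {_b : V₂ // False} :=
    ncard_subtype_sum _ _ _ (fun _ => Iff.rfl) (fun b => by simp [edgeRJoin, joinOn])
  have h2 : Nat.card {x : V₁ ⊕ ↥G₁.edgeSet // (Rgraph G₁).Adj (Sum.inl v) x}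
      = Nat.card {w : V₁ // G₁.Adj v w} + Nat.card {e : ↥G₁.edgeSet // v ∈ (e : Sym2 V₁)} :=
    ncard_subtype_sum _ _ _ (fun _ => Iff.rfl) (fun _ => Iff.rfl)
  rw [h1, h2, ncard_incidence, ← gdeg_ncard, ncard_false, two_mul, add_zero]

lemma deg_ve (e : ↥G₁.edgeSet) :
    gdeg (edgeRJoin G₁ G₂) (.inl (.inr e)) = 2 + Nat.card V₂ := by
  rw [gdeg_ncard]
  have h1 : Nat.card {y : (V₁ ⊕ ↥G₁.edgeSet) ⊕ V₂ //
        (edgeRJoin G₁ G₂).Adj (Sum.inl (Sum.inr e)) y}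
      = Nat.card {x : V₁ ⊕ ↥G₁.edgeSet // (Rgraph G₁).Adj (Sum.inr e) x}
        + Nat.card {_b : V₂ // True} :=
    ncard_subtype_sum _ _ _ (fun _ => Iff.rfl) (fun b => by simp [edgeRJoin, joinOn])
  have h2 : Nat.card {x : V₁ ⊕ ↥G₁.edgeSet // (Rgraph G₁).Adj (Sum.inr e) x}
      = Nat.card {v : V₁ // v ∈ (e : Sym2 V₁)} + Nat.card {_f : ↥G₁.edgeSet // False} :=
    ncard_subtype_sum _ _ _ (fun _ => Iff.rfl) (fun _ => Iff.rfl)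
  rw [h1, h2, ncard_mem_edge, ncard_false, ncard_true, add_zero]

lemma deg_b (b : V₂) :
    gdeg (edgeRJoin G₁ G₂) (.inr b) = Nat.card ↥G₁.edgeSet + gdeg G₂ b := by
  rw [gdeg_ncard]
  have h1 : Nat.card {y : (V₁ ⊕ ↥G₁.edgeSet) ⊕ V₂ // (edgeRJoin G₁ G₂).Adj (Sum.inr b) y}
      = Nat.card {x : V₁ ⊕ ↥G₁.edgeSet // x.isRight = true}
        + Nat.card {b' : V₂ // G₂.Adj b b'} :=
    ncard_subtype_sum _ _ _ (fun _ => Iff.rfl) (fun _ => Iff.rfl)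
  have h2 : Nat.card {x : V₁ ⊕ ↥G₁.edgeSet // x.isRight = true}
      = Nat.card {_v : V₁ // False} + Nat.card {_e : ↥G₁.edgeSet // True} :=
    ncard_subtype_sum _ _ _ (fun _ => by simp) (fun _ => by simp)
  rw [h1, h2, ncard_false, ncard_true, ← gdeg_ncard, zero_add]

end Deg
lemma Findex_eq {V : Type*} [Finite V] (G : SimpleGraph V) [inst : Fintype V] :
    Findex G = ∑ v : V, gdeg G v ^ 3 := by
  unfold Findex
  congr 1
  exact congrArg (fun i : Fintype V => @Finset.univ V i) (Subsingleton.elim _ _)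

lemma M1_eq {V : Type*} [Finite V] (G : SimpleGraph V) [inst : Fintype V] :
    M1 G = ∑ v : V, gdeg G v ^ 2 := by
  unfold M1
  congr 1
  exact congrArg (fun i : Fintype V => @Finset.univ V i) (Subsingleton.elim _ _)

theorem Findex_edgeRJoin {V₁ V₂ : Type*} [Finite V₁] [Finite V₂]
    (G₁ : SimpleGraph V₁) (G₂ : SimpleGraph V₂)
    (hc₁ : G₁.Connected) (hc₂ : G₂.Connected)
    (n₂ m₁ m₂ : ℕ)
    (hn₂ : n₂ = Nat.card V₂)
    (hm₁ : m₁ = numEdges G₁) (hm₂ : m₂ = numEdges G₂) :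
    (Findex (edgeRJoin G₁ G₂) : ℤ) =
      8 * (Findex G₁ : ℤ) + (Findex G₂ : ℤ) + 3 * (m₁ : ℤ) * (M1 G₂ : ℤ)
        + 6 * (m₁ : ℤ) ^ 2 * (m₂ : ℤ) + (m₁ : ℤ) * ((n₂ : ℤ) + 2) ^ 3 + (n₂ : ℤ) * (m₁ : ℤ) ^ 3 := by
  haveI := Fintype.ofFinite V₁
  haveI := Fintype.ofFinite V₂
  haveI : Fintype ↥G₁.edgeSet := Fintype.ofFinite _
  have hm₁' : m₁ = Nat.card ↥G₁.edgeSet := hm₁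
  have key : Findex (edgeRJoin G₁ G₂)
      = 8 * Findex G₁ + Findex G₂ + 3 * m₁ * M1 G₂ + 6 * m₁ ^ 2 * m₂
        + m₁ * (n₂ + 2) ^ 3 + n₂ * m₁ ^ 3 := by
    rw [Findex_eq, Fintype.sum_sum_type, Fintype.sum_sum_type]
    simp only [deg_vv, deg_ve, deg_b]
    have e1 : ∑ v : V₁, (2 * gdeg G₁ v) ^ 3 = 8 * Findex G₁ := by
      rw [Findex_eq G₁, Finset.mul_sum]
      exact Finset.sum_congr rfl (fun v _ => by ring)
    have e2 : ∑ _e : ↥G₁.edgeSet, (2 + Nat.card V₂) ^ 3 = m₁ * (n₂ + 2) ^ 3 := by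
      rw [Finset.sum_const, Finset.card_univ, ← Nat.card_eq_fintype_card, ← hm₁', ← hn₂,
        smul_eq_mul]
      ring
    have e3 : ∑ b : V₂, (Nat.card ↥G₁.edgeSet + gdeg G₂ b) ^ 3
        = Findex G₂ + 3 * m₁ * M1 G₂ + 6 * m₁ ^ 2 * m₂ + n₂ * m₁ ^ 3 := by
      calc ∑ b : V₂, (Nat.card ↥G₁.edgeSet + gdeg G₂ b) ^ 3
          = ∑ b : V₂, (gdeg G₂ b ^ 3 + 3 * m₁ * gdeg G₂ b ^ 2
              + 3 * m₁ ^ 2 * gdeg G₂ b + m₁ ^ 3) :=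
            Finset.sum_congr rfl (fun b _ => by rw [← hm₁']; ring)
        _ = Findex G₂ + 3 * m₁ * M1 G₂ + 6 * m₁ ^ 2 * m₂ + n₂ * m₁ ^ 3 := by
            rw [Finset.sum_add_distrib, Finset.sum_add_distrib, Finset.sum_add_distrib,
              Finset.sum_const, Finset.card_univ, ← Finset.mul_sum, ← Finset.mul_sum,
              sum_gdeg, ← hm₂, ← Findex_eq, ← M1_eq, ← Nat.card_eq_fintype_card, ← hn₂,
              smul_eq_mul]
            ring
    rw [e1, e2, e3]
    ring
  rw [key]
  push_cast
  ring
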